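/- Let N > 0 be real and n ∈ ℕ. Then for every y ∈ (−1, 1), setting x := √N · y/√(1 − y²), one has √N · (1 − y²)^{−3/2} · (1 + x²/N)^{−(N+1+n)} · (H_n^N(x))² = (n!)² · N^{1/2−n} · (1 − y²)^{N−1/2} · (C_n^N(y))². (Here √N·(1−y²)^{−3/2} is the Jacobian dx/dy of the inverse change of variables.) -/

import Mathlib

open Real MeasureTheory Filter

/-- Relativistic Hermite polynomial via its Rodrigues formula. -/
noncomputable def relHermite (n : ℕ) (N : ℝ) (X : ℝ) : ℝ :=
  (-1 : ℝ)^n * (1 + X^2/N)^(N + (n : ℝ)) *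
    iteratedDeriv n (fun t : ℝ => (1 + t^2/N)^(-N)) X

/-- Cariñena polynomial with positive parameter via its Rodrigues formula. -/
noncomputable def carinenaPos (n : ℕ) (𝒩 : ℝ) (X : ℝ) : ℝ :=
  (-1 : ℝ)^n * (1 + X^2/𝒩)^(𝒩 + 1/2) *
    iteratedDeriv n (fun t : ℝ => (1 + t^2/𝒩)^((n : ℝ) - 𝒩 - 1/2)) X

/-- Cariñena polynomial with negative parameter 𝒩 = -ν via its Rodrigues formula. -/
noncomputable def carinenaNeg (n : ℕ) (ν : ℝ) (X : ℝ) : ℝ :=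
  (-1 : ℝ)^n * (1 - X^2/ν)^((1:ℝ)/2 - ν) *
    iteratedDeriv n (fun t : ℝ => (1 - t^2/ν)^((n : ℝ) + ν - 1/2)) X

/-- The constant α_{n,ν} = (2ν)_n / (2^n n! (ν+1/2)_n). -/
noncomputable def alphaConst (n : ℕ) (ν : ℝ) : ℝ :=
  (ascPochhammer ℝ n).eval (2*ν) /
    (2^n * (n.factorial : ℝ) * (ascPochhammer ℝ n).eval (ν + 1/2))

/-- Gegenbauer polynomial via its Rodrigues formula. -/
noncomputable def gegenbauer (n : ℕ) (ν : ℝ) (X : ℝ) : ℝ :=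
  alphaConst n ν * (-1 : ℝ)^n * (1 - X^2)^((1:ℝ)/2 - ν) *
    iteratedDeriv n (fun t : ℝ => (1 - t^2)^((n : ℝ) + ν - 1/2)) X


open Topology


lemma contDiffOn_iteratedDeriv' {s : Set ℝ} {f : ℝ → ℝ} (hs : IsOpen s)
    (hf : ∀ m : ℕ, ContDiffOn ℝ m f s) (n : ℕ) (m : ℕ) :
    ContDiffOn ℝ m (iteratedDeriv n f) s := by
  induction n generalizing m with
  | zero => simpa [iteratedDeriv_zero] using hf m
  | succ n ih =>
    rw [iteratedDeriv_succ]
    exact (ih (m+1)).deriv_of_isOpen hs (by exact_mod_cast le_refl _)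

lemma hasDerivAt_iteratedDeriv' {s : Set ℝ} {f : ℝ → ℝ} (hs : IsOpen s)
    (hf : ∀ m : ℕ, ContDiffOn ℝ m f s) (n : ℕ) {y : ℝ} (hy : y ∈ s) :
    HasDerivAt (iteratedDeriv n f) (iteratedDeriv (n+1) f y) y := by
  have h1 : DifferentiableAt ℝ (iteratedDeriv n f) y := by
    have h := (contDiffOn_iteratedDeriv' hs hf n 1).differentiableOn (by norm_num)
    exact h.differentiableAt (hs.mem_nhds hy)
  simpa [iteratedDeriv_succ] using h1.hasDerivAt

lemma iteratedDeriv_const_mul_on {s : Set ℝ} {v : ℝ → ℝ} (hs : IsOpen s)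
    (hv : ∀ m : ℕ, ContDiffOn ℝ m v s) (c : ℝ) (n : ℕ) :
    ∀ y ∈ s, iteratedDeriv n (fun t => c * v t) y = c * iteratedDeriv n v y := by
  induction n with
  | zero => simp
  | succ n ih =>
    intro y hy
    rw [iteratedDeriv_succ (f := fun t => c * v t)]
    have h0 : deriv (iteratedDeriv n fun t => c * v t) y
        = deriv (fun z => c * iteratedDeriv n v z) y :=
      Filter.EventuallyEq.deriv_eq (by
        filter_upwards [hs.mem_nhds hy] with z hz using ih z hz)
    rw [h0]
    exact (((hasDerivAt_iteratedDeriv' hs hv n hy).const_mul c)).deriv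

lemma iteratedDeriv_add_on {s : Set ℝ} {u v : ℝ → ℝ} (hs : IsOpen s)
    (hu : ∀ m : ℕ, ContDiffOn ℝ m u s) (hv : ∀ m : ℕ, ContDiffOn ℝ m v s) (n : ℕ) :
    ∀ y ∈ s, iteratedDeriv n (fun t => u t + v t) y
      = iteratedDeriv n u y + iteratedDeriv n v y := by
  induction n with
  | zero => simp
  | succ n ih =>
    intro y hy
    rw [iteratedDeriv_succ (f := fun t => u t + v t)]
    have h0 : deriv (iteratedDeriv n fun t => u t + v t) y
        = deriv (fun z => iteratedDeriv n u z + iteratedDeriv n v z) y :=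
      Filter.EventuallyEq.deriv_eq (by
        filter_upwards [hs.mem_nhds hy] with z hz using ih z hz)
    rw [h0]
    exact ((hasDerivAt_iteratedDeriv' hs hu n hy).add
      (hasDerivAt_iteratedDeriv' hs hv n hy)).deriv

lemma iteratedDeriv_id_mul_on {s : Set ℝ} {u : ℝ → ℝ} (hs : IsOpen s)
    (hu : ∀ m : ℕ, ContDiffOn ℝ m u s) (n : ℕ) :
    ∀ y ∈ s, iteratedDeriv n (fun t => t * u t) y
      = y * iteratedDeriv n u y + n * iteratedDeriv (n-1) u y := by
  induction n with
  | zero => intro y hy; simp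
  | succ n ih =>
    intro y hy
    rw [iteratedDeriv_succ (f := fun t => t * u t)]
    have h0 : deriv (iteratedDeriv n fun t => t * u t) y
        = deriv (fun z => z * iteratedDeriv n u z + n * iteratedDeriv (n-1) u z) y :=
      Filter.EventuallyEq.deriv_eq (by
        filter_upwards [hs.mem_nhds hy] with z hz using ih z hz)
    rw [h0]
    have h1 : HasDerivAt (fun z => z * iteratedDeriv n u z + n * iteratedDeriv (n-1) u z)
        (1 * iteratedDeriv n u y + y * iteratedDeriv (n+1) u y
          + n * iteratedDeriv (n-1+1) u y) y :=
      ((hasDerivAt_id y).mul (hasDerivAt_iteratedDeriv' hs hu n hy)).add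
        ((hasDerivAt_iteratedDeriv' hs hu (n-1) hy).const_mul (n:ℝ))
    rw [h1.deriv]
    cases n with
    | zero => ring
    | succ m => simp only [Nat.succ_sub_one]; push_cast; ring

noncomputable def gg (a : ℝ) : ℝ → ℝ := fun t => (1 - t^2) ^ a

lemma sIoo_open : IsOpen (Set.Ioo (-1:ℝ) 1) := isOpen_Ioo

lemma oneSub_pos {t : ℝ} (ht : t ∈ Set.Ioo (-1:ℝ) 1) : 0 < 1 - t^2 := by
  nlinarith [ht.1, ht.2]

lemma gg_smooth (a : ℝ) (m : ℕ) : ContDiffOn ℝ m (gg a) (Set.Ioo (-1:ℝ) 1) := by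
  apply ContDiffOn.rpow
  · exact (contDiff_const.sub (contDiff_id.pow 2)).contDiffOn
  · exact contDiffOn_const
  · exact fun t ht => (oneSub_pos ht).ne'

lemma gg_mul_smooth (a : ℝ) (m : ℕ) :
    ContDiffOn ℝ m (fun t => t * gg a t) (Set.Ioo (-1:ℝ) 1) :=
  contDiffOn_id.mul (gg_smooth a m)

lemma gg_hasDerivAt (a : ℝ) {y : ℝ} (hy : y ∈ Set.Ioo (-1:ℝ) 1) :
    HasDerivAt (gg a) ((-2*y) * a * (1 - y^2) ^ (a - 1)) y := by
  have h : HasDerivAt (fun t : ℝ => 1 - t^2) (-2*y) y := by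
    simpa using ((hasDerivAt_pow 2 y).const_sub 1)
  have h' := h.rpow_const (p := a) (Or.inl (oneSub_pos hy).ne')
  exact h'.congr_deriv (by ring)

/-- deriv of gg (a+1) equals -2(a+1) t gg a on the interval -/
lemma gg_deriv_eq (a : ℝ) :
    Set.EqOn (deriv (gg (a+1))) (fun t => (-2*(a+1)) * (t * gg a t)) (Set.Ioo (-1:ℝ) 1) := by
  intro y hy
  have h := (gg_hasDerivAt (a+1) hy).deriv
  rw [h]
  have : (1 - y^2) ^ (a + 1 - 1) = gg a y := by
    simp [gg]
  rw [this]; ring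

lemma gg_succ_eq (a : ℝ) :
    Set.EqOn (gg (a+1)) (fun t => gg a t + (-1) * (t * (t * gg a t))) (Set.Ioo (-1:ℝ) 1) := by
  intro y hy
  have hp := oneSub_pos hy
  simp only [gg]
  rw [Real.rpow_add hp, Real.rpow_one]
  ring

/-- Lemma C -/
lemma lemC (a : ℝ) (n : ℕ) {y : ℝ} (hy : y ∈ Set.Ioo (-1:ℝ) 1) :
    (2*a+1-n) * iteratedDeriv (n+1) (gg (a+1)) y
      = (2*a+2) * ((1-y^2) * iteratedDeriv (n+1) (gg a) y
          - (n+1) * y * iteratedDeriv n (gg a) y) := by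
  set s := Set.Ioo (-1:ℝ) 1
  have hso : IsOpen s := isOpen_Ioo
  set A := iteratedDeriv (n+1) (gg a) y with hA
  set B := iteratedDeriv n (gg a) y with hB
  set Cm := iteratedDeriv (n-1) (gg a) y with hCm
  -- e1
  have e1 : iteratedDeriv (n+1) (gg (a+1)) y = -2*(a+1) * (y * B + n * Cm) := by
    rw [iteratedDeriv_succ']
    have h1 : iteratedDeriv n (deriv (gg (a+1))) y
        = iteratedDeriv n (fun t => (-2*(a+1)) * (t * gg a t)) y :=
      (gg_deriv_eq a).iteratedDeriv_of_isOpen hso n hy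
    rw [h1, iteratedDeriv_const_mul_on hso (gg_mul_smooth a) _ n y hy,
      iteratedDeriv_id_mul_on hso (fun m => gg_smooth a m) n y hy]
  -- e2
  have hv1 : ∀ m : ℕ, ContDiffOn ℝ m (fun t => t * (t * gg a t)) (Set.Ioo (-1:ℝ) 1) :=
    fun m => contDiffOn_id.mul (gg_mul_smooth a m)
  have hv2 : ∀ m : ℕ, ContDiffOn ℝ m (fun t => (-1:ℝ) * (t * (t * gg a t))) (Set.Ioo (-1:ℝ) 1) :=
    fun m => contDiffOn_const.mul (hv1 m)
  have e2 : iteratedDeriv (n+1) (gg (a+1)) y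
      = A - (y * (y * A + (n+1) * B) + (n+1) * (y * B + n * Cm)) := by
    have h1 : iteratedDeriv (n+1) (gg (a+1)) y
        = iteratedDeriv (n+1) (fun t => gg a t + (-1) * (t * (t * gg a t))) y :=
      (gg_succ_eq a).iteratedDeriv_of_isOpen hso (n+1) hy
    rw [h1, iteratedDeriv_add_on hso (fun m => gg_smooth a m) hv2 (n+1) y hy,
      iteratedDeriv_const_mul_on hso hv1 (-1) (n+1) y hy,
      iteratedDeriv_id_mul_on hso (fun m => gg_mul_smooth a m) (n+1) y hy]
    simp only [Nat.add_sub_cancel]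
    rw [iteratedDeriv_id_mul_on hso (fun m => gg_smooth a m) (n+1) y hy,
      iteratedDeriv_id_mul_on hso (fun m => gg_smooth a m) n y hy]
    simp only [Nat.add_sub_cancel, ← hA, ← hB, ← hCm]
    push_cast
    ring
  linear_combination (2*a+2) * e2 - ((n:ℝ)+1) * e1

noncomputable def ff (N : ℝ) : ℝ → ℝ := fun t => (1 + t^2/N) ^ (-N)
noncomputable def Xf (N : ℝ) : ℝ → ℝ := fun y => Real.sqrt N * y * (1 - y^2) ^ (-(1:ℝ)/2)

noncomputable def bet (N : ℝ) : ℕ → ℝ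
  | 0 => 1
  | n+1 => bet N n * ((n:ℝ) + 2*N) / (Real.sqrt N * (2*(n:ℝ) + 2*N + 1))

lemma ff_base_pos {N : ℝ} (hN : 0 < N) (t : ℝ) : 0 < 1 + t^2/N := by positivity

lemma ff_smooth {N : ℝ} (hN : 0 < N) (m : ℕ) : ContDiff ℝ m (ff N) := by
  apply ContDiff.rpow
  · exact contDiff_const.add ((contDiff_id.pow 2).div_const N)
  · exact contDiff_const
  · exact fun t => (ff_base_pos hN t).ne'

lemma ff_iter_hasDerivAt {N : ℝ} (hN : 0 < N) (n : ℕ) (x : ℝ) :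
    HasDerivAt (iteratedDeriv n (ff N)) (iteratedDeriv (n+1) (ff N) x) x :=
  hasDerivAt_iteratedDeriv' isOpen_univ (fun m => (ff_smooth hN m).contDiffOn) n (Set.mem_univ x)

lemma Xf_hasDerivAt {N : ℝ} (hN : 0 < N) {y : ℝ} (hy : y ∈ Set.Ioo (-1:ℝ) 1) :
    HasDerivAt (Xf N) (Real.sqrt N * (1 - y^2) ^ (-(3:ℝ)/2)) y := by
  have hp := oneSub_pos hy
  have h1 : HasDerivAt (fun t : ℝ => 1 - t^2) (-2*y) y := by
    simpa using ((hasDerivAt_pow 2 y).const_sub 1)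
  have h2 := h1.rpow_const (p := -(1:ℝ)/2) (Or.inl hp.ne')
  have h3 := ((hasDerivAt_id y).mul h2).const_mul (Real.sqrt N)
  have e1 : (1 - y^2) ^ (-(1:ℝ)/2 - 1) = (1 - y^2) ^ (-(3:ℝ)/2) := by norm_num
  have e2 : (1 - y^2) ^ (-(1:ℝ)/2) = (1 - y^2) * (1 - y^2) ^ (-(3:ℝ)/2) := by
    rw [show (-(1:ℝ)/2) = 1 + (-(3:ℝ)/2) by norm_num, Real.rpow_one_add' hp.le (by norm_num)]
  refine (h3.congr_of_eventuallyEq (Filter.Eventually.of_forall fun z => ?_)).congr_deriv ?_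
  · simp [Xf]; ring
  · rw [e1, e2]; simp only [id_eq]; ring

lemma Xf_sq {N : ℝ} (hN : 0 < N) {y : ℝ} (hy : y ∈ Set.Ioo (-1:ℝ) 1) :
    1 + (Xf N y)^2/N = (1 - y^2)⁻¹ := by
  have hp := oneSub_pos hy
  have h1 : ((1 - y^2) ^ (-(1:ℝ)/2))^2 = (1 - y^2)⁻¹ := by
    rw [← Real.rpow_natCast ((1 - y^2) ^ (-(1:ℝ)/2)) 2, ← Real.rpow_mul hp.le]
    norm_num [Real.rpow_neg_one]
  have hsq : (Real.sqrt N)^2 = N := Real.sq_sqrt hN.le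
  simp only [Xf, mul_pow, h1, hsq]
  field_simp
  ring

lemma rpow_half_pow {P : ℝ} (hp : 0 < P) (k : ℕ) :
    P ^ (((k:ℝ)+1)/2) = (P ^ ((1:ℝ)/2)) ^ (k+1) := by
  rw [← Real.rpow_natCast (P ^ ((1:ℝ)/2)) (k+1), ← Real.rpow_mul hp.le]
  push_cast; ring_nf

lemma keyId {N : ℝ} (hN : 0 < N) (n : ℕ) :
    ∀ y ∈ Set.Ioo (-1:ℝ) 1,
      iteratedDeriv n (ff N) (Xf N y)
        = bet N n * (1-y^2) ^ (((n:ℝ)+1)/2) * iteratedDeriv n (gg ((n:ℝ) + N - 1/2)) y := by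
  induction n with
  | zero =>
    intro y hy
    have hp := oneSub_pos hy
    simp only [iteratedDeriv_zero, bet, ff, gg]
    rw [Xf_sq hN hy, Real.inv_rpow hp.le, Real.rpow_neg hp.le, inv_inv]
    rw [one_mul, ← Real.rpow_add hp]
    norm_num
  | succ n ih =>
    intro y hy
    have hp := oneSub_pos hy
    set a : ℝ := (n:ℝ) + N - 1/2 with ha
    set P := 1 - y^2 with hPdef
    set w := P ^ ((1:ℝ)/2) with hw
    have hwpos : 0 < w := Real.rpow_pos_of_pos hp _
    have hw2 : w^2 = P := by
      rw [hw, ← Real.rpow_natCast (P ^ ((1:ℝ)/2)) 2, ← Real.rpow_mul hp.le]; norm_num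
    have hsN : (0:ℝ) < Real.sqrt N := Real.sqrt_pos.mpr hN
    have h1 : HasDerivAt (fun z => iteratedDeriv n (ff N) (Xf N z))
        (iteratedDeriv (n+1) (ff N) (Xf N y) * (Real.sqrt N * P ^ (-(3:ℝ)/2))) y :=
      (ff_iter_hasDerivAt hN n (Xf N y)).comp y (Xf_hasDerivAt hN hy)
    have hgd := hasDerivAt_iteratedDeriv' isOpen_Ioo (fun m => gg_smooth a m) n hy
    have hb : HasDerivAt (fun t : ℝ => 1 - t^2) (-2*y) y := by
      simpa using ((hasDerivAt_pow 2 y).const_sub 1)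
    have hq : HasDerivAt (fun z : ℝ => (1 - z^2) ^ (((n:ℝ)+1)/2))
        ((-2*y) * (((n:ℝ)+1)/2) * P ^ ((((n:ℝ)+1)/2) - 1)) y :=
      hb.rpow_const (Or.inl hp.ne')
    have h2 : HasDerivAt
        (fun z => bet N n * (1 - z^2) ^ (((n:ℝ)+1)/2) * iteratedDeriv n (gg a) z)
        ((bet N n * ((-2*y) * (((n:ℝ)+1)/2) * P ^ ((((n:ℝ)+1)/2) - 1)))
            * iteratedDeriv n (gg a) y
          + (bet N n * P ^ (((n:ℝ)+1)/2)) * iteratedDeriv (n+1) (gg a) y) y :=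
      (hq.const_mul (bet N n)).mul hgd
    have heq : (fun z => iteratedDeriv n (ff N) (Xf N z))
        =ᶠ[nhds y] (fun z => bet N n * (1 - z^2) ^ (((n:ℝ)+1)/2) * iteratedDeriv n (gg a) z) := by
      filter_upwards [isOpen_Ioo.mem_nhds hy] with z hz using ih z hz
    have hEq := h1.unique (h2.congr_of_eventuallyEq heq)
    have hC := lemC a n hy
    -- rewrite rpow's in terms of w
    have h32 : P ^ ((3:ℝ)/2) = w^3 := by
      rw [hw, ← Real.rpow_natCast (P ^ ((1:ℝ)/2)) 3, ← Real.rpow_mul hp.le]; norm_num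
    have hm32 : P ^ (-(3:ℝ)/2) = (w^3)⁻¹ := by
      rw [show (-(3:ℝ)/2) = -((3:ℝ)/2) by ring, Real.rpow_neg hp.le, h32]
    have hhalf : P ^ (((n:ℝ)+1)/2) = w^(n+1) := rpow_half_pow hp n
    have hhalf1 : P ^ ((((n:ℝ)+1)/2) - 1) = w^(n+1) / P := by
      rw [Real.rpow_sub hp, Real.rpow_one, hhalf]
    rw [hm32, hhalf, hhalf1] at hEq
    -- rewrite the goal
    have hexp : ((n+1:ℕ):ℝ) + N - 1/2 = a + 1 := by push_cast [ha]; ring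
    rw [hexp, rpow_half_pow hp (n+1)]
    have hexp2 : 2*a+1-(n:ℝ) = (n:ℝ) + 2*N := by rw [ha]; ring
    have hexp3 : 2*a+2 = 2*(n:ℝ)+2*N+1 := by rw [ha]; ring
    rw [hexp2, hexp3] at hC
    simp only [bet]
    have hden : (n:ℝ) + 2*N ≠ 0 := by positivity
    have hden2 : 2*(n:ℝ)+2*N+1 ≠ 0 := by positivity
    rw [← hPdef] at hC
    rw [← hw]
    rw [← hw2] at hEq hC
    field_simp at hEq hC ⊢
    linear_combination (2*((n:ℝ)+N)+1) * hEq - bet N n * w^(n+2) * hC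

lemma bet_eq' {N : ℝ} (hN : 0 < N) (n : ℕ) :
    bet N n * (Real.sqrt N)^n * (2^n * (ascPochhammer ℝ n).eval (N + 1/2))
      = (ascPochhammer ℝ n).eval (2*N) := by
  induction n with
  | zero => simp [bet]
  | succ n ih =>
    have hsN : (0:ℝ) < Real.sqrt N := Real.sqrt_pos.mpr hN
    have hne : Real.sqrt N * (2*(n:ℝ) + 2*N + 1) ≠ 0 := by positivity
    simp only [bet, ascPochhammer_succ_eval, pow_succ]
    rw [div_mul_eq_mul_div, div_mul_eq_mul_div, div_eq_iff hne]
    push_cast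
    linear_combination (((n:ℝ)+2*N) * Real.sqrt N * (2*(n:ℝ)+2*N+1)) * ih

theorem relHermite_density_change_of_variables (N : ℝ) (hN : 0 < N) (n : ℕ)
    (y : ℝ) (hy : y ∈ Set.Ioo (-1 : ℝ) 1)
    (x : ℝ) (hx : x = Real.sqrt N * y / Real.sqrt (1 - y^2)) :
    Real.sqrt N * (1 - y^2)^(-(3:ℝ)/2) * (1 + x^2/N)^(-(N + 1 + n)) * (relHermite n N x)^2
      = ((n.factorial : ℝ))^2 * N^((1:ℝ)/2 - n) * (1 - y^2)^(N - 1/2) *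
          (gegenbauer n N y)^2 := by
  have hp : 0 < 1 - y^2 := oneSub_pos hy
  have hsN : (0:ℝ) < Real.sqrt N := Real.sqrt_pos.mpr hN
  -- x = Xf N y
  have hxX : x = Xf N y := by
    rw [hx, Xf, Real.sqrt_eq_rpow (1 - y^2),
      show (-(1:ℝ)/2) = -(1/(2:ℝ)) by ring, Real.rpow_neg hp.le, div_eq_mul_inv]
  -- abbreviations
  set P := 1 - y^2 with hPdef
  set w := P ^ ((1:ℝ)/2) with hwdef
  set V := P ^ N with hVdef
  set G := iteratedDeriv n (gg ((n:ℝ) + N - 1/2)) y with hGdef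
  have hwpos : 0 < w := Real.rpow_pos_of_pos hp _
  have hVpos : 0 < V := Real.rpow_pos_of_pos hp _
  have hw2 : w^2 = P := by
    rw [hwdef, ← Real.rpow_natCast (P ^ ((1:ℝ)/2)) 2, ← Real.rpow_mul hp.le]; norm_num
  -- relHermite in terms of G
  have hff : (fun t : ℝ => (1 + t^2/N)^(-N)) = ff N := rfl
  have hH : relHermite n N x
      = (-1:ℝ)^n * (V * w^(2*n))⁻¹ * (bet N n * w^(n+1) * G) := by
    rw [relHermite, hff, hxX, keyId hN n y hy, Xf_sq hN hy, ← hPdef, ← hGdef]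
    rw [rpow_half_pow hp n, ← hwdef]
    have h1 : (P⁻¹) ^ (N + (n:ℝ)) = (V * w^(2*n))⁻¹ := by
      rw [Real.inv_rpow hp.le, Real.rpow_add hp, ← hVdef, Real.rpow_natCast, ← hw2, ← pow_mul]
    rw [h1]
  -- gegenbauer in terms of G
  have hgeg : gegenbauer n N y = alphaConst n N * (-1:ℝ)^n * (w / V) * G := by
    rw [gegenbauer]
    have h2 : (fun t : ℝ => (1 - t^2)^((n:ℝ) + N - 1/2)) = gg ((n:ℝ) + N - 1/2) := rfl
    rw [h2, ← hGdef, ← hPdef]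
    have h3 : P ^ ((1:ℝ)/2 - N) = w / V := by
      rw [Real.rpow_sub hp, ← hwdef, ← hVdef]
    rw [h3]
  -- other rpow conversions in the goal
  have h4 : (1 + x^2/N) = P⁻¹ := by rw [hxX, Xf_sq hN hy]
  have h5 : (P⁻¹) ^ (-(N + 1 + (n:ℝ))) = V * w^(2*(n+1)) := by
    rw [Real.inv_rpow hp.le, Real.rpow_neg hp.le, inv_inv, show N + 1 + (n:ℝ) = N + ((n:ℝ)+1) by ring,
      Real.rpow_add hp, ← hVdef]
    congr 1
    rw [show ((n:ℝ)+1) = (((n+1:ℕ)):ℝ) by push_cast; ring, Real.rpow_natCast, ← hw2, ← pow_mul]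
  have h6 : P ^ (-(3:ℝ)/2) = (w^3)⁻¹ := by
    rw [show (-(3:ℝ)/2) = -((3:ℝ)/2) by ring, Real.rpow_neg hp.le]
    congr 1
    rw [hwdef, ← Real.rpow_natCast (P ^ ((1:ℝ)/2)) 3, ← Real.rpow_mul hp.le]; norm_num
  have h7 : P ^ (N - 1/2) = V / w := by rw [Real.rpow_sub hp, ← hVdef, ← hwdef]
  have h8 : N ^ ((1:ℝ)/2 - (n:ℝ)) = Real.sqrt N / N^n := by
    rw [Real.rpow_sub hN, Real.rpow_natCast, ← Real.sqrt_eq_rpow]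
  rw [h4, h5, h6, h7, h8, hH, hgeg]
  -- now pure algebra
  have hsign : ((-1:ℝ)^n)^2 = 1 := by
    rw [← pow_mul, mul_comm, pow_mul]; norm_num
  have hsq2 : ((Real.sqrt N)^n)^2 = N^n := by
    rw [← pow_mul, mul_comm, pow_mul, Real.sq_sqrt hN.le]
  have hbet2 : (bet N n)^2 * N^n * (2^n * (ascPochhammer ℝ n).eval (N + 1/2))^2
      = ((ascPochhammer ℝ n).eval (2*N))^2 := by
    rw [← hsq2]
    calc (bet N n)^2 * ((Real.sqrt N)^n)^2 * (2^n * (ascPochhammer ℝ n).eval (N + 1/2))^2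
        = (bet N n * (Real.sqrt N)^n * (2^n * (ascPochhammer ℝ n).eval (N + 1/2)))^2 := by
          ring
      _ = _ := by rw [bet_eq' hN n]
  have hq : (ascPochhammer ℝ n).eval (N + 1/2) ≠ 0 :=
    (ascPochhammer_pos n _ (by linarith)).ne'
  have hfac : ((n.factorial : ℝ)) ≠ 0 := by exact_mod_cast n.factorial_ne_zero
  have hNn : (N:ℝ)^n ≠ 0 := by positivity
  rw [alphaConst]
  set q := (ascPochhammer ℝ n).eval (N + 1/2) with hqdef
  set p := (ascPochhammer ℝ n).eval (2*N) with hpdef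
  have hw0 : w ≠ 0 := hwpos.ne'
  have hV0 : V ≠ 0 := hVpos.ne'
  field_simp
  linear_combination (w^(4*n+4) * G^2) * hbet2
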